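/- Let m ≥ 4 and T be positive integers and a_1,…,a_{3m} positive integers with ∑ a_i = m·T. Let the physical network be the tree with root R, intermediate vertices u_1,…,u_m adjacent to R, and two leaf children attached to each u_k (so 1 + 3m vertices in total), where every edge has capacity T. Let the virtual network be a star with a center c and 3m leaves, the edge to leaf i having demand a_i. Then the index set {1,…,3m} can be partitioned into m disjoint subsets of size three, each with ∑ a_i exactly T, if and only if there exists a bijection f from the virtual vertices to the physical vertices such that for every tree edge e, ∑ of a_i over all leaves i such that e lies on the unique tree path from f(c) to f(leaf_i) is at most T. (This is the correctness of the reduction of the 3-partition problem showing that cVNE of a star virtual network on a 2-star physical network is NP-complete.) -/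

import Mathlib

open Classical Finset

private lemma pin_eq {t : Finset ℕ} {b : ℕ → ℕ} {T : ℕ}
    (hle : ∀ k ∈ t, b k ≤ T)
    (hs : ∑ k ∈ t, b k = t.card * T) : ∀ k ∈ t, b k = T := by
  intro k hk
  by_contra h
  have hlt :=
    Finset.sum_lt_sum (f := b) (g := fun _ => T) hle
      ⟨k, hk, lt_of_le_of_ne (hle k hk) h⟩
  rw [Finset.sum_const, smul_eq_mul] at hlt
  omega

/-- Correctness of the reduction of the 3-partition problem showing
that cVNE of a star virtual network on a 2-star physical network is NP-complete.

Physical network: a tree with root `R = (0,0)`, intermediate vertices `u_k = (k,0)`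
for `k ∈ 1..m`, and two leaves `(k,1)`, `(k,2)` attached to each `u_k`; every edge
has capacity `T`.  An edge of the tree lies on the path between two embedded vertices
iff exactly one of the two lies in the subtree below that edge: the subtree below
`R–u_k` is `{p | p.1 = k}` and the subtree below `u_k–(k,j)` is `{(k,j)}`.

Virtual network: a star with center `c` (index `0`) and `3m` leaves (indices
`1..3m`), the edge to leaf `i` having demand `aᵢ`.

The numbers `a₁,…,a_{3m}` (with `∑ aᵢ = m·T`) admit a partition into `m` triples
each summing to `T` iff there is a capacity-feasible embedding. -/
theorem threePartition_iff_star_on_twoStar_cVNE (m T : ℕ) (hm : 4 ≤ m) (hT : 1 ≤ T)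
    (a : ℕ → ℕ) (ha : ∀ i ∈ Finset.Icc 1 (3 * m), 1 ≤ a i)
    (hsum : ∑ i ∈ Finset.Icc 1 (3 * m), a i = m * T) :
    (∃ g : ℕ → ℕ, (∀ i ∈ Finset.Icc 1 (3 * m), g i ∈ Finset.Icc 1 m) ∧
        ∀ k ∈ Finset.Icc 1 m,
          ((Finset.Icc 1 (3 * m)).filter (fun i => g i = k)).card = 3 ∧
          ∑ i ∈ (Finset.Icc 1 (3 * m)).filter (fun i => g i = k), a i = T) ↔
    (∃ f : ℕ → ℕ × ℕ,
      Set.BijOn f (Set.Icc 0 (3 * m))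
        (insert ((0, 0) : ℕ × ℕ) ((Set.Icc 1 m) ×ˢ (Set.Icc 0 2))) ∧
      (∀ k ∈ Finset.Icc 1 m,
        (∑ i ∈ Finset.Icc 1 (3 * m),
          if ((f 0).1 = k ∧ (f i).1 ≠ k) ∨ ((f 0).1 ≠ k ∧ (f i).1 = k)
          then a i else 0) ≤ T) ∧
      (∀ k ∈ Finset.Icc 1 m, ∀ j ∈ ({1, 2} : Finset ℕ),
        (∑ i ∈ Finset.Icc 1 (3 * m),
          if (f 0 = (k, j) ∧ f i ≠ (k, j)) ∨ (f 0 ≠ (k, j) ∧ f i = (k, j))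
          then a i else 0) ≤ T)) := by
  constructor
  · -- FORWARD: partition ⟹ embedding
    rintro ⟨g, hg1, hg2⟩
    set r : ℕ → ℕ :=
      fun i => ((Finset.Icc 1 (3 * m)).filter (fun i' => g i' = g i ∧ i' < i)).card with hrdef
    set F : ℕ → ℕ × ℕ := fun i => if i = 0 then (0, 0) else (g i, r i) with hFdef
    have hF0 : F 0 = (0, 0) := by simp [hFdef]
    have hFi : ∀ i : ℕ, i ≠ 0 → F i = (g i, r i) := by
      intro i hi; rw [hFdef]; simp [hi]
    have hpos : ∀ i ∈ Finset.Icc 1 (3 * m), i ≠ 0 := by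
      intro i hi; rw [Finset.mem_Icc] at hi; omega
    -- rank bound
    have hr2 : ∀ i ∈ Finset.Icc 1 (3 * m), r i ≤ 2 := by
      intro i hi
      have hsub : (Finset.Icc 1 (3 * m)).filter (fun i' => g i' = g i ∧ i' < i) ⊆
          ((Finset.Icc 1 (3 * m)).filter (fun i' => g i' = g i)).erase i := by
        intro x hx
        simp only [Finset.mem_filter, Finset.mem_erase] at hx ⊢
        exact ⟨by omega, hx.1, hx.2.1⟩
      have hmem : i ∈ (Finset.Icc 1 (3 * m)).filter (fun i' => g i' = g i) := by
        simp [Finset.mem_filter, hi]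
      have hcard := (hg2 (g i) (hg1 i hi)).1
      have := Finset.card_le_card hsub
      rw [Finset.card_erase_of_mem hmem, hcard] at this
      simp only [hrdef]
      omega
    -- rank is strictly monotone within a fiber
    have hmono : ∀ i ∈ Finset.Icc 1 (3 * m), ∀ i' ∈ Finset.Icc 1 (3 * m),
        i < i' → g i = g i' → r i < r i' := by
      intro i hi i' hi' hlt hgg
      apply Finset.card_lt_card
      constructor
      · intro x hx
        simp only [Finset.mem_filter] at hx ⊢
        exact ⟨hx.1, hx.2.1.trans hgg, by omega⟩
      · intro hcon
        have : i ∈ (Finset.Icc 1 (3 * m)).filter (fun i'' => g i'' = g i' ∧ i'' < i') := by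
          simp only [Finset.mem_filter]; exact ⟨hi, hgg, hlt⟩
        have := hcon this
        simp only [Finset.mem_filter] at this
        omega
    -- injectivity on the leaves
    have hFinj : ∀ i ∈ Finset.Icc 1 (3 * m), ∀ i' ∈ Finset.Icc 1 (3 * m),
        F i = F i' → i = i' := by
      intro i hi i' hi' hF
      rw [hFi i (hpos i hi), hFi i' (hpos i' hi')] at hF
      have h1 : g i = g i' := congrArg Prod.fst hF
      have h2 : r i = r i' := congrArg Prod.snd hF
      rcases lt_trichotomy i i' with h | h | h
      · exact absurd h2 (Nat.ne_of_lt (hmono i hi i' hi' h h1))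
      · exact h
      · exact absurd h2 (Nat.ne_of_gt (hmono i' hi' i hi h h1.symm))
    -- image of each fiber
    have hfibimg : ∀ k ∈ Finset.Icc 1 m,
        ((Finset.Icc 1 (3 * m)).filter (fun i => g i = k)).image F =
          {k} ×ˢ Finset.Icc 0 2 := by
      intro k hk
      apply Finset.eq_of_subset_of_card_le
      · intro p hp
        simp only [Finset.mem_image, Finset.mem_filter] at hp
        obtain ⟨i, ⟨hiS, hik⟩, rfl⟩ := hp
        rw [hFi i (hpos i hiS)]
        simp only [Finset.mem_product, Finset.mem_singleton, Finset.mem_Icc]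
        exact ⟨hik, Nat.zero_le _, hr2 i hiS⟩
      · have hc2 : (((Finset.Icc 1 (3 * m)).filter (fun i => g i = k)).image F).card = 3 := by
          rw [Finset.card_image_of_injOn, (hg2 k hk).1]
          intro x hx y hy hxy
          exact hFinj x (Finset.mem_filter.mp hx).1 y (Finset.mem_filter.mp hy).1 hxy
        rw [hc2]
        simp [Nat.card_Icc]
    refine ⟨F, ⟨?_, ?_, ?_⟩, ?_, ?_⟩
    · -- MapsTo
      intro x hx
      by_cases hx0 : x = 0
      · subst hx0; rw [hF0]; exact Set.mem_insert _ _
      · have hxS : x ∈ Finset.Icc 1 (3 * m) := by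
          rw [Set.mem_Icc] at hx; rw [Finset.mem_Icc]; omega
        rw [hFi x hx0]
        have hgx := hg1 x hxS
        rw [Finset.mem_Icc] at hgx
        exact Set.mem_insert_of_mem _
          (Set.mem_prod.mpr ⟨Set.mem_Icc.mpr hgx,
            Set.mem_Icc.mpr ⟨Nat.zero_le _, hr2 x hxS⟩⟩)
    · -- InjOn
      intro x hx y hy hxy
      by_cases hx0 : x = 0 <;> by_cases hy0 : y = 0
      · rw [hx0, hy0]
      · exfalso
        have hyS : y ∈ Finset.Icc 1 (3 * m) := by
          rw [Set.mem_Icc] at hy; rw [Finset.mem_Icc]; omega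
        rw [hx0, hF0, hFi y hy0] at hxy
        have := congrArg Prod.fst hxy
        have hgy := hg1 y hyS
        rw [Finset.mem_Icc] at hgy
        simp at this
        omega
      · exfalso
        have hxS : x ∈ Finset.Icc 1 (3 * m) := by
          rw [Set.mem_Icc] at hx; rw [Finset.mem_Icc]; omega
        rw [hy0, hF0, hFi x hx0] at hxy
        have := congrArg Prod.fst hxy
        have hgx := hg1 x hxS
        rw [Finset.mem_Icc] at hgx
        simp at this
        omega
      · have hxS : x ∈ Finset.Icc 1 (3 * m) := by
          rw [Set.mem_Icc] at hx; rw [Finset.mem_Icc]; omega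
        have hyS : y ∈ Finset.Icc 1 (3 * m) := by
          rw [Set.mem_Icc] at hy; rw [Finset.mem_Icc]; omega
        exact hFinj x hxS y hyS hxy
    · -- SurjOn
      intro p hp
      rw [Set.mem_insert_iff] at hp
      rcases hp with rfl | hp
      · exact ⟨0, Set.mem_Icc.mpr ⟨le_rfl, Nat.zero_le _⟩, hF0⟩
      · obtain ⟨hp1, hp2⟩ := Set.mem_prod.mp hp
        rw [Set.mem_Icc] at hp1 hp2
        have hk : p.1 ∈ Finset.Icc 1 m := Finset.mem_Icc.mpr hp1
        have hpmem : p ∈ ({p.1} : Finset ℕ) ×ˢ Finset.Icc 0 2 := by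
          exact Finset.mem_product.mpr
            ⟨Finset.mem_singleton_self _, Finset.mem_Icc.mpr hp2⟩
        rw [← hfibimg p.1 hk] at hpmem
        obtain ⟨i, hiF, hFip⟩ := Finset.mem_image.mp hpmem
        have hiS := (Finset.mem_filter.mp hiF).1
        rw [Finset.mem_Icc] at hiS
        exact ⟨i, Set.mem_Icc.mpr ⟨Nat.zero_le _, hiS.2⟩, hFip⟩
    · -- intermediate edges
      intro k hk
      have hk1 : 1 ≤ k := (Finset.mem_Icc.mp hk).1
      have hterm : ∀ i ∈ Finset.Icc 1 (3 * m),
          (if ((F 0).1 = k ∧ (F i).1 ≠ k) ∨ ((F 0).1 ≠ k ∧ (F i).1 = k)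
            then a i else 0) = if g i = k then a i else 0 := by
        intro i hi
        have hk0 : ¬ ((0 : ℕ) = k) := by omega
        simp only [hFi i (hpos i hi), hF0]
        by_cases h : g i = k <;> simp [h, hk0]
      rw [Finset.sum_congr rfl hterm, ← Finset.sum_filter, (hg2 k hk).2]
    · -- leaf edges
      intro k hk j hj
      have hk1 : 1 ≤ k := (Finset.mem_Icc.mp hk).1
      have hne : F 0 ≠ (k, j) := by
        rw [hF0]
        intro h
        have := congrArg Prod.fst h
        simp at this
        omega
      have hterm : ∀ i ∈ Finset.Icc 1 (3 * m),
          (if (F 0 = (k, j) ∧ F i ≠ (k, j)) ∨ (F 0 ≠ (k, j) ∧ F i = (k, j))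
            then a i else 0) ≤ if g i = k then a i else 0 := by
        intro i hi
        by_cases h : F i = (k, j)
        · have hgk : g i = k := by
            rw [hFi i (hpos i hi)] at h
            exact congrArg Prod.fst h
          simp [h, hne, hgk]
        · simp [h, hne]
      calc ∑ i ∈ Finset.Icc 1 (3 * m),
            (if (F 0 = (k, j) ∧ F i ≠ (k, j)) ∨ (F 0 ≠ (k, j) ∧ F i = (k, j))
              then a i else 0)
          ≤ ∑ i ∈ Finset.Icc 1 (3 * m), (if g i = k then a i else 0) :=
            Finset.sum_le_sum hterm
        _ = T := by rw [← Finset.sum_filter, (hg2 k hk).2]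
  · -- BACKWARD: embedding ⟹ partition
    rintro ⟨f, hbij, hc1, hc2⟩
    have hinj := hbij.2.1
    have h0S : (0 : ℕ) ∈ Set.Icc 0 (3 * m) := Set.mem_Icc.mpr ⟨le_rfl, Nat.zero_le _⟩
    have hleafS : ∀ i ∈ Finset.Icc 1 (3 * m), (i : ℕ) ∈ Set.Icc 0 (3 * m) := by
      intro i hi; rw [Finset.mem_Icc] at hi; exact Set.mem_Icc.mpr ⟨Nat.zero_le _, hi.2⟩
    have hne0 : ∀ i ∈ Finset.Icc 1 (3 * m), f i ≠ f 0 := by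
      intro i hi h
      have := hinj (hleafS i hi) h0S h
      rw [Finset.mem_Icc] at hi
      omega
    have h4T : 4 * T ≤ m * T := Nat.mul_le_mul_right T hm
    have hinj' : ∀ x ∈ Finset.Icc 1 (3 * m), ∀ y ∈ Finset.Icc 1 (3 * m),
        f x = f y → x = y := fun x hx y hy h => hinj (hleafS x hx) (hleafS y hy) h
    have h0t := hbij.1 h0S
    rw [Set.mem_insert_iff] at h0t
    rcases h0t with h00 | hprod
    · -- center at the root: extract the partition
      have hprod : ∀ i ∈ Finset.Icc 1 (3 * m),
          f i ∈ (Set.Icc 1 m) ×ˢ (Set.Icc (0:ℕ) 2) := by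
        intro i hi
        have := hbij.1 (hleafS i hi)
        rw [Set.mem_insert_iff] at this
        rcases this with h | h
        · exact absurd (h.trans h00.symm) (hne0 i hi)
        · exact h
      have hg1' : ∀ i ∈ Finset.Icc 1 (3 * m), (f i).1 ∈ Finset.Icc 1 m := by
        intro i hi
        have := (Set.mem_prod.mp (hprod i hi)).1
        rw [Set.mem_Icc] at this
        exact Finset.mem_Icc.mpr this
      have himg : (Finset.Icc 1 (3 * m)).image f = Finset.Icc 1 m ×ˢ Finset.Icc 0 2 := by
        apply Finset.eq_of_subset_of_card_le
        · intro p hp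
          obtain ⟨i, hi, rfl⟩ := Finset.mem_image.mp hp
          obtain ⟨h1, h2⟩ := Set.mem_prod.mp (hprod i hi)
          rw [Set.mem_Icc] at h1 h2
          rw [Finset.mem_product]
          exact ⟨Finset.mem_Icc.mpr h1, Finset.mem_Icc.mpr h2⟩
        · rw [Finset.card_image_of_injOn
            (fun x hx y hy h => hinj' x hx y hy h)]
          simp [Nat.card_Icc]
          omega
      have hfib3 : ∀ k ∈ Finset.Icc 1 m,
          ((Finset.Icc 1 (3 * m)).filter (fun i => (f i).1 = k)).card = 3 := by
        intro k hk
        have hkIcc := Finset.mem_Icc.mp hk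
        have hcardim :
            (((Finset.Icc 1 (3 * m)).filter (fun i => (f i).1 = k)).image f).card =
              ((Finset.Icc 1 (3 * m)).filter (fun i => (f i).1 = k)).card := by
          apply Finset.card_image_of_injOn
          intro x hx y hy h
          exact hinj' x (Finset.mem_filter.mp hx).1 y (Finset.mem_filter.mp hy).1 h
        have h1 : ((Finset.Icc 1 (3 * m)).filter (fun i => (f i).1 = k)).image f =
            ((Finset.Icc 1 (3 * m)).image f).filter (fun q => q.1 = k) := by
          rw [Finset.filter_image]
        have h2 : (Finset.Icc 1 m ×ˢ Finset.Icc 0 2).filter (fun q => (q : ℕ × ℕ).1 = k) =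
            ({k} : Finset ℕ) ×ˢ Finset.Icc 0 2 := by
          ext p
          simp only [Finset.mem_filter, Finset.mem_product, Finset.mem_singleton,
            Finset.mem_Icc]
          constructor
          · intro h; exact ⟨h.2, h.1.2⟩
          · intro h; exact ⟨⟨by omega, h.2⟩, h.1⟩
        rw [← hcardim, h1, himg, h2]
        simp [Nat.card_Icc]
      have hfsumle : ∀ k ∈ Finset.Icc 1 m,
          ∑ i ∈ (Finset.Icc 1 (3 * m)).filter (fun i => (f i).1 = k), a i ≤ T := by
        intro k hk
        have hk1 : 1 ≤ k := (Finset.mem_Icc.mp hk).1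
        have hkey := hc1 k hk
        have hterm : ∀ i ∈ Finset.Icc 1 (3 * m),
            (if ((f 0).1 = k ∧ (f i).1 ≠ k) ∨ ((f 0).1 ≠ k ∧ (f i).1 = k)
              then a i else 0) = if (f i).1 = k then a i else 0 := by
          intro i hi
          have h0 : (f 0).1 = 0 := by rw [h00]
          have hk0 : ¬ ((0 : ℕ) = k) := by omega
          by_cases h : (f i).1 = k <;> simp [h, h0, hk0]
        rw [Finset.sum_congr rfl hterm, ← Finset.sum_filter] at hkey
        exact hkey
      have htot : ∑ k ∈ Finset.Icc 1 m,
          ∑ i ∈ (Finset.Icc 1 (3 * m)).filter (fun i => (f i).1 = k), a i =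
            (Finset.Icc 1 m).card * T := by
        rw [Finset.sum_fiberwise_of_maps_to hg1' a, hsum, Nat.card_Icc]
        simp
      have hfe := pin_eq hfsumle htot
      exact ⟨fun i => (f i).1, hg1', fun k hk => ⟨hfib3 k hk, hfe k hk⟩⟩
    · -- center not at the root: contradiction
      exfalso
      obtain ⟨hk0, hj0⟩ := Set.mem_prod.mp hprod
      rw [Set.mem_Icc] at hk0 hj0
      have hkmem : (f 0).1 ∈ Finset.Icc 1 m := Finset.mem_Icc.mpr hk0
      by_cases hj : (f 0).2 = 0
      · -- center at (k₀, 0)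
        have hmem1 : ((f 0).1, 1) ∈
            insert ((0, 0) : ℕ × ℕ) ((Set.Icc 1 m) ×ˢ (Set.Icc (0:ℕ) 2)) :=
          Set.mem_insert_of_mem _
            (Set.mem_prod.mpr ⟨Set.mem_Icc.mpr hk0, Set.mem_Icc.mpr ⟨by omega, by omega⟩⟩)
        have hmem2 : ((f 0).1, 2) ∈
            insert ((0, 0) : ℕ × ℕ) ((Set.Icc 1 m) ×ˢ (Set.Icc (0:ℕ) 2)) :=
          Set.mem_insert_of_mem _
            (Set.mem_prod.mpr ⟨Set.mem_Icc.mpr hk0, Set.mem_Icc.mpr ⟨by omega, by omega⟩⟩)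
        obtain ⟨i1, hi1S, hfi1⟩ := hbij.2.2 hmem1
        obtain ⟨i2, hi2S, hfi2⟩ := hbij.2.2 hmem2
        have hi1ne0 : i1 ≠ 0 := by
          rintro rfl
          have := congrArg Prod.snd hfi1
          simp at this
          omega
        have hi2ne0 : i2 ≠ 0 := by
          rintro rfl
          have := congrArg Prod.snd hfi2
          simp at this
          omega
        have hi1 : i1 ∈ Finset.Icc 1 (3 * m) := by
          rw [Set.mem_Icc] at hi1S; rw [Finset.mem_Icc]; omega
        have hi2 : i2 ∈ Finset.Icc 1 (3 * m) := by
          rw [Set.mem_Icc] at hi2S; rw [Finset.mem_Icc]; omega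
        have hf0ne1 : f 0 ≠ ((f 0).1, 1) := by
          intro h
          have := congrArg Prod.snd h
          simp at this
          omega
        have hf0ne2 : f 0 ≠ ((f 0).1, 2) := by
          intro h
          have := congrArg Prod.snd h
          simp at this
          omega
        -- a i1 ≤ T
        have ha1 : a i1 ≤ T := by
          have hkey := hc2 (f 0).1 hkmem 1 (by simp)
          have hle := Finset.single_le_sum
            (f := fun i => if (f 0 = ((f 0).1, 1) ∧ f i ≠ ((f 0).1, 1)) ∨
              (f 0 ≠ ((f 0).1, 1) ∧ f i = ((f 0).1, 1)) then a i else 0)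
            (fun i _ => Nat.zero_le _) hi1
          simpa [hf0ne1, hfi1] using hle.trans hkey
        have ha2 : a i2 ≤ T := by
          have hkey := hc2 (f 0).1 hkmem 2 (by simp)
          have hle := Finset.single_le_sum
            (f := fun i => if (f 0 = ((f 0).1, 2) ∧ f i ≠ ((f 0).1, 2)) ∨
              (f 0 ≠ ((f 0).1, 2) ∧ f i = ((f 0).1, 2)) then a i else 0)
            (fun i _ => Nat.zero_le _) hi2
          simpa [hf0ne2, hfi2] using hle.trans hkey
        -- the fiber over k₀ is exactly {i1, i2}
        have hi12 : i1 ≠ i2 := by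
          intro h
          rw [h, hfi2] at hfi1
          have := congrArg Prod.snd hfi1
          simp at this
        have hfib : (Finset.Icc 1 (3 * m)).filter (fun i => (f i).1 = (f 0).1) =
            {i1, i2} := by
          ext x
          simp only [Finset.mem_filter, Finset.mem_insert, Finset.mem_singleton]
          constructor
          · rintro ⟨hxS, hx1⟩
            have hxt := hbij.1 (hleafS x hxS)
            rw [Set.mem_insert_iff] at hxt
            rcases hxt with h | h
            · rw [h] at hx1
              simp at hx1
              omega
            · obtain ⟨_, hx2'⟩ := Set.mem_prod.mp h
              rw [Set.mem_Icc] at hx2'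
              have hxne : f x ≠ f 0 := hne0 x hxS
              have h2 : (f x).2 = 1 ∨ (f x).2 = 2 := by
                by_contra hcon
                push_neg at hcon
                have hx20 : (f x).2 = 0 := by omega
                exact hxne (Prod.ext_iff.mpr ⟨hx1, by rw [hx20, hj]⟩)
              rcases h2 with h2 | h2
              · left
                apply hinj' x hxS i1 hi1
                rw [hfi1]
                exact Prod.ext_iff.mpr ⟨hx1, h2⟩
              · right
                apply hinj' x hxS i2 hi2
                rw [hfi2]
                exact Prod.ext_iff.mpr ⟨hx1, h2⟩
          · rintro (rfl | rfl)
            · exact ⟨hi1, by rw [hfi1]⟩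
            · exact ⟨hi2, by rw [hfi2]⟩
        -- load on the edge R–u_{k₀}
        have hkey := hc1 (f 0).1 hkmem
        have hterm : ∀ i ∈ Finset.Icc 1 (3 * m),
            (if ((f 0).1 = (f 0).1 ∧ (f i).1 ≠ (f 0).1) ∨
              ((f 0).1 ≠ (f 0).1 ∧ (f i).1 = (f 0).1) then a i else 0) =
              if ¬ (f i).1 = (f 0).1 then a i else 0 := by
          intro i hi
          by_cases h : (f i).1 = (f 0).1 <;> simp [h]
        rw [Finset.sum_congr rfl hterm, ← Finset.sum_filter] at hkey
        have hsplit := Finset.sum_filter_add_sum_filter_not (Finset.Icc 1 (3 * m))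
          (fun i => (f i).1 = (f 0).1) a
        rw [hfib, Finset.sum_pair hi12, hsum] at hsplit
        omega
      · -- center at (k₀, j₀) with j₀ ∈ {1,2}
        have hjm : (f 0).2 ∈ ({1, 2} : Finset ℕ) := by
          simp only [Finset.mem_insert, Finset.mem_singleton]
          omega
        have hkey := hc2 (f 0).1 hkmem (f 0).2 hjm
        have hterm : ∀ i ∈ Finset.Icc 1 (3 * m),
            (if (f 0 = ((f 0).1, (f 0).2) ∧ f i ≠ ((f 0).1, (f 0).2)) ∨
              (f 0 ≠ ((f 0).1, (f 0).2) ∧ f i = ((f 0).1, (f 0).2)) then a i else 0) =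
              a i := by
          intro i hi
          have h1 : f 0 = ((f 0).1, (f 0).2) := rfl
          have h2 : f i ≠ ((f 0).1, (f 0).2) := by rw [← h1]; exact hne0 i hi
          exact if_pos (Or.inl ⟨h1, h2⟩)
        rw [Finset.sum_congr rfl hterm, hsum] at hkey
        omega
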